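/- Alternating sum cancellation (Case 2.3 of the induction): for integers z_2 ≥ z_1 > c (with c = y_{n-ℓ}), and reals q_{m+1},…,q_{n-ℓ} > 0, ∑_{y=c+1}^{z_1 - 1} q_{n-ℓ}^{z_2-y} Q_{[m+1,n-ℓ-1]}(z_1,y) + (-1)^{n-ℓ-m-2} ∑_{y=z_1}^{z_2} q_{n-ℓ}^{z_2-y} Q^†_{[m+1,n-ℓ-1]}(z_1,y) = Q_{[m+1,n-ℓ]}(z_1,c) q_{n-ℓ}^{z_2-c} - (-1)^{n-ℓ-m-1} Q^†_{[m+1,n-ℓ]}(z_1,z_2), where Q_{[a,b]} and Q^†_{[a,b]} denote the compositions Q_a∘⋯∘Q_b and Q^†_a∘⋯∘Q^†_b of the strictly-left and weakly-right geometric kernels. -/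

import Mathlib

open scoped BigOperators

/-- Composition of kernels on `ℤ`. -/
noncomputable def kComp (A B : ℤ → ℤ → ℝ) : ℤ → ℤ → ℝ :=
  fun x z => ∑' y : ℤ, A x y * B y z

/-- Iterated composition of a list of kernels (identity kernel for the empty list). -/
noncomputable def kCompList (L : List (ℤ → ℤ → ℝ)) : ℤ → ℤ → ℝ :=
  L.foldr kComp (fun x z => if x = z then 1 else 0)

/-- The strictly-left geometric kernel `Q_j(x,y) = q_j^{y-x} 1_{y<x}`. -/
noncomputable def Qker (q : ℕ → ℝ) (j : ℕ) : ℤ → ℤ → ℝ :=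
  fun x y => if y < x then q j ^ (y - x) else 0

/-- The weakly-right geometric kernel `Q^†_j(x,y) = q_j^{y-x} 1_{y≥x}`. -/
noncomputable def Qdag (q : ℕ → ℝ) (j : ℕ) : ℤ → ℤ → ℝ :=
  fun x y => if x ≤ y then q j ^ (y - x) else 0

/-- `Q_{[a,b]} = Q_a ∘ ⋯ ∘ Q_b`. -/
noncomputable def QcompIcc (q : ℕ → ℝ) (a b : ℕ) : ℤ → ℤ → ℝ :=
  kCompList (((List.range (b + 1 - a)).map fun s => Qker q (a + s)))

/-- `Q^†_{[a,b]} = Q^†_a ∘ ⋯ ∘ Q^†_b`. -/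
noncomputable def QdagCompIcc (q : ℕ → ℝ) (a b : ℕ) : ℤ → ℤ → ℝ :=
  kCompList (((List.range (b + 1 - a)).map fun s => Qdag q (a + s)))

/-- alternating sum cancellation (Case 2.3 of the induction).  For
`z₂ ≥ z₁ > c` and positive `q_{m+1},…,q_{n-ℓ}`:
`∑_{y=c+1}^{z₁-1} q_{n-ℓ}^{z₂-y} Q_{[m+1,n-ℓ-1]}(z₁,y)
  + (-1)^{n-ℓ-m-2} ∑_{y=z₁}^{z₂} q_{n-ℓ}^{z₂-y} Q^†_{[m+1,n-ℓ-1]}(z₁,y)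
  = Q_{[m+1,n-ℓ]}(z₁,c) q_{n-ℓ}^{z₂-c} - (-1)^{n-ℓ-m-1} Q^†_{[m+1,n-ℓ]}(z₁,z₂)`. -/
lemma kCompList_cons_apply (K : ℤ → ℤ → ℝ) (L : List (ℤ → ℤ → ℝ)) (x z : ℤ) :
    kCompList (K :: L) x z = ∑' y : ℤ, K x y * kCompList L y z := rfl

lemma supp_low (L : List (ℤ → ℤ → ℝ))
    (hL : ∀ K ∈ L, ∀ x y : ℤ, x ≤ y → K x y = 0) :
    ∀ x y : ℤ, x < y → kCompList L x y = 0 := by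
  induction L with
  | nil =>
    intro x y h
    simp only [kCompList, List.foldr]
    simp [show x ≠ y by omega]
  | cons K L ih =>
    intro x y h
    rw [kCompList_cons_apply]
    refine (tsum_congr fun u => ?_).trans tsum_zero
    by_cases hu : x ≤ u
    · rw [hL K List.mem_cons_self x u hu, zero_mul]
    · rw [ih (fun A hA => hL A (List.mem_cons_of_mem K hA)) u y (by omega), mul_zero]

lemma supp_low_strict (L : List (ℤ → ℤ → ℝ)) (hne : L ≠ [])
    (hL : ∀ K ∈ L, ∀ x y : ℤ, x ≤ y → K x y = 0) :
    ∀ x y : ℤ, x ≤ y → kCompList L x y = 0 := by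
  cases L with
  | nil => exact absurd rfl hne
  | cons K L =>
    intro x y h
    rw [kCompList_cons_apply]
    refine (tsum_congr fun u => ?_).trans tsum_zero
    by_cases hu : x ≤ u
    · rw [hL K List.mem_cons_self x u hu, zero_mul]
    · rw [supp_low L (fun A hA => hL A (List.mem_cons_of_mem K hA)) u y (by omega), mul_zero]

lemma supp_up (L : List (ℤ → ℤ → ℝ))
    (hL : ∀ K ∈ L, ∀ x y : ℤ, y < x → K x y = 0) :
    ∀ x y : ℤ, y < x → kCompList L x y = 0 := by
  induction L with
  | nil =>
    intro x y h
    simp only [kCompList, List.foldr]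
    simp [show x ≠ y by omega]
  | cons K L ih =>
    intro x y h
    rw [kCompList_cons_apply]
    refine (tsum_congr fun u => ?_).trans tsum_zero
    by_cases hu : u < x
    · rw [hL K List.mem_cons_self x u hu, zero_mul]
    · rw [ih (fun A hA => hL A (List.mem_cons_of_mem K hA)) u y (by omega), mul_zero]

lemma snoc_low (C : ℤ → ℤ → ℝ) (hC : ∀ x y : ℤ, x ≤ y → C x y = 0)
    (L : List (ℤ → ℤ → ℝ)) (hL : ∀ K ∈ L, ∀ x y : ℤ, x ≤ y → K x y = 0) :
    ∀ x z : ℤ, kCompList (L ++ [C]) x z = ∑' y : ℤ, kCompList L x y * C y z := by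
  induction L with
  | nil =>
    intro x z
    have h1 : kCompList ([] ++ [C]) x z
        = ∑' y : ℤ, C x y * (if y = z then (1:ℝ) else 0) := rfl
    have h2 : (∑' y : ℤ, kCompList ([] : List (ℤ → ℤ → ℝ)) x y * C y z)
        = ∑' y : ℤ, (if x = y then (1:ℝ) else 0) * C y z := rfl
    rw [h1, h2, tsum_eq_single z fun y hy => by simp [hy],
        tsum_eq_single x fun y hy => by simp [Ne.symm hy]]
    simp
  | cons K L ih =>
    intro x z
    have hK : ∀ a b : ℤ, a ≤ b → K a b = 0 := hL K List.mem_cons_self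
    have hL' : ∀ A ∈ L, ∀ a b : ℤ, a ≤ b → A a b = 0 :=
      fun A hA => hL A (List.mem_cons_of_mem K hA)
    have hLC : ∀ A ∈ L ++ [C], ∀ a b : ℤ, a ≤ b → A a b = 0 := by
      intro A hA
      rcases List.mem_append.mp hA with h | h
      · exact hL' A h
      · simp only [List.mem_singleton] at h; subst h; exact hC
    have lhs1 : kCompList ((K :: L) ++ [C]) x z
        = ∑' u : ℤ, K x u * kCompList (L ++ [C]) u z := rfl
    have lhs2 : (∑' u : ℤ, K x u * kCompList (L ++ [C]) u z)
        = ∑ u ∈ Finset.Icc z (x - 1), K x u * kCompList (L ++ [C]) u z := by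
      refine tsum_eq_sum ?_
      intro u hu
      rw [Finset.mem_Icc] at hu
      by_cases hcase : x ≤ u
      · rw [hK x u hcase, zero_mul]
      · rw [supp_low_strict (L ++ [C]) (by simp) hLC u z (by omega), mul_zero]
    have lhs3 : ∀ u ∈ Finset.Icc z (x - 1),
        K x u * kCompList (L ++ [C]) u z
          = ∑ y ∈ Finset.Icc z (x - 1), K x u * (kCompList L u y * C y z) := by
      intro u hu
      rw [Finset.mem_Icc] at hu
      rw [ih hL' u z, tsum_eq_sum (s := Finset.Icc z (x - 1)) ?_, Finset.mul_sum]
      intro y hy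
      rw [Finset.mem_Icc] at hy
      by_cases hcase : y ≤ z
      · rw [hC y z hcase, mul_zero]
      · rw [supp_low L hL' u y (by omega), zero_mul]
    have rhs1 : (∑' y : ℤ, kCompList (K :: L) x y * C y z)
        = ∑ y ∈ Finset.Icc z (x - 1), kCompList (K :: L) x y * C y z := by
      refine tsum_eq_sum ?_
      intro y hy
      rw [Finset.mem_Icc] at hy
      by_cases hcase : y ≤ z
      · rw [hC y z hcase, mul_zero]
      · rw [supp_low_strict (K :: L) (by simp) hL x y (by omega), zero_mul]
    have rhs2 : ∀ y ∈ Finset.Icc z (x - 1),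
        kCompList (K :: L) x y * C y z
          = ∑ u ∈ Finset.Icc z (x - 1), K x u * kCompList L u y * C y z := by
      intro y hy
      rw [Finset.mem_Icc] at hy
      rw [kCompList_cons_apply, tsum_eq_sum (s := Finset.Icc z (x - 1)) ?_, Finset.sum_mul]
      intro u hu
      rw [Finset.mem_Icc] at hu
      by_cases hcase : x ≤ u
      · rw [hK x u hcase, zero_mul]
      · rw [supp_low L hL' u y (by omega), mul_zero]
    rw [lhs1, lhs2, Finset.sum_congr rfl lhs3, rhs1, Finset.sum_congr rfl rhs2,
        Finset.sum_comm]
    simp only [mul_assoc]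

lemma snoc_up (C : ℤ → ℤ → ℝ) (hC : ∀ x y : ℤ, y < x → C x y = 0)
    (L : List (ℤ → ℤ → ℝ)) (hL : ∀ K ∈ L, ∀ x y : ℤ, y < x → K x y = 0) :
    ∀ x z : ℤ, kCompList (L ++ [C]) x z = ∑' y : ℤ, kCompList L x y * C y z := by
  induction L with
  | nil =>
    intro x z
    have h1 : kCompList ([] ++ [C]) x z
        = ∑' y : ℤ, C x y * (if y = z then (1:ℝ) else 0) := rfl
    have h2 : (∑' y : ℤ, kCompList ([] : List (ℤ → ℤ → ℝ)) x y * C y z)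
        = ∑' y : ℤ, (if x = y then (1:ℝ) else 0) * C y z := rfl
    rw [h1, h2, tsum_eq_single z fun y hy => by simp [hy],
        tsum_eq_single x fun y hy => by simp [Ne.symm hy]]
    simp
  | cons K L ih =>
    intro x z
    have hK : ∀ a b : ℤ, b < a → K a b = 0 := hL K List.mem_cons_self
    have hL' : ∀ A ∈ L, ∀ a b : ℤ, b < a → A a b = 0 :=
      fun A hA => hL A (List.mem_cons_of_mem K hA)
    have hLC : ∀ A ∈ L ++ [C], ∀ a b : ℤ, b < a → A a b = 0 := by
      intro A hA
      rcases List.mem_append.mp hA with h | h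
      · exact hL' A h
      · simp only [List.mem_singleton] at h; subst h; exact hC
    have lhs1 : kCompList ((K :: L) ++ [C]) x z
        = ∑' u : ℤ, K x u * kCompList (L ++ [C]) u z := rfl
    have lhs2 : (∑' u : ℤ, K x u * kCompList (L ++ [C]) u z)
        = ∑ u ∈ Finset.Icc x z, K x u * kCompList (L ++ [C]) u z := by
      refine tsum_eq_sum ?_
      intro u hu
      rw [Finset.mem_Icc] at hu
      by_cases hcase : u < x
      · rw [hK x u hcase, zero_mul]
      · rw [supp_up (L ++ [C]) hLC u z (by omega), mul_zero]
    have lhs3 : ∀ u ∈ Finset.Icc x z,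
        K x u * kCompList (L ++ [C]) u z
          = ∑ y ∈ Finset.Icc x z, K x u * (kCompList L u y * C y z) := by
      intro u hu
      rw [Finset.mem_Icc] at hu
      rw [ih hL' u z, tsum_eq_sum (s := Finset.Icc x z) ?_, Finset.mul_sum]
      intro y hy
      rw [Finset.mem_Icc] at hy
      by_cases hcase : z < y
      · rw [hC y z hcase, mul_zero]
      · rw [supp_up L hL' u y (by omega), zero_mul]
    have rhs1 : (∑' y : ℤ, kCompList (K :: L) x y * C y z)
        = ∑ y ∈ Finset.Icc x z, kCompList (K :: L) x y * C y z := by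
      refine tsum_eq_sum ?_
      intro y hy
      rw [Finset.mem_Icc] at hy
      by_cases hcase : z < y
      · rw [hC y z hcase, mul_zero]
      · rw [supp_up (K :: L) hL x y (by omega), zero_mul]
    have rhs2 : ∀ y ∈ Finset.Icc x z,
        kCompList (K :: L) x y * C y z
          = ∑ u ∈ Finset.Icc x z, K x u * kCompList L u y * C y z := by
      intro y hy
      rw [Finset.mem_Icc] at hy
      rw [kCompList_cons_apply, tsum_eq_sum (s := Finset.Icc x z) ?_, Finset.sum_mul]
      intro u hu
      rw [Finset.mem_Icc] at hu
      by_cases hcase : u < x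
      · rw [hK x u hcase, zero_mul]
      · rw [supp_up L hL' u y (by omega), mul_zero]
    rw [lhs1, lhs2, Finset.sum_congr rfl lhs3, rhs1, Finset.sum_congr rfl rhs2,
        Finset.sum_comm]
    simp only [mul_assoc]

theorem stmt19 (n ℓ m : ℕ) (hrange : m + 2 ≤ n - ℓ) (q : ℕ → ℝ) (hq : ∀ i, 0 < q i)
    (c z1 z2 : ℤ) (h1 : c < z1) (h2 : z1 ≤ z2) :
    (∑ w ∈ Finset.Icc (c + 1) (z1 - 1),
        q (n - ℓ) ^ (z2 - w) * QcompIcc q (m + 1) (n - ℓ - 1) z1 w)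
    + (-1 : ℝ) ^ (n - ℓ - m - 2) *
        (∑ w ∈ Finset.Icc z1 z2,
          q (n - ℓ) ^ (z2 - w) * QdagCompIcc q (m + 1) (n - ℓ - 1) z1 w)
    = QcompIcc q (m + 1) (n - ℓ) z1 c * q (n - ℓ) ^ (z2 - c)
      - (-1 : ℝ) ^ (n - ℓ - m - 1) * QdagCompIcc q (m + 1) (n - ℓ) z1 z2 := by
  set k := n - ℓ with hkdef
  have hkm : m + 2 ≤ k := hrange
  have hqne : q k ≠ 0 := ne_of_gt (hq k)
  have hQlow : ∀ j : ℕ, ∀ x y : ℤ, x ≤ y → Qker q j x y = 0 := by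
    intro j x y h; simp [Qker, show ¬ y < x by omega]
  have hQup : ∀ j : ℕ, ∀ x y : ℤ, y < x → Qdag q j x y = 0 := by
    intro j x y h; simp [Qdag, show ¬ x ≤ y by omega]
  have hlen1 : k + 1 - (m + 1) = (k - m - 1) + 1 := by omega
  have hlen2 : (k - 1) + 1 - (m + 1) = k - m - 1 := by omega
  have hidx : m + 1 + (k - m - 1) = k := by omega
  have hnnil : k - m - 1 ≠ 0 := by omega
  -- lower kernels
  have hmemlow : ∀ K ∈ (List.range (k - m - 1)).map (fun s => Qker q (m + 1 + s)),
      ∀ x y : ℤ, x ≤ y → K x y = 0 := by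
    intro K hK
    simp only [List.mem_map] at hK
    obtain ⟨s, -, rfl⟩ := hK
    exact hQlow _
  have hmemup : ∀ K ∈ (List.range (k - m - 1)).map (fun s => Qdag q (m + 1 + s)),
      ∀ x y : ℤ, y < x → K x y = 0 := by
    intro K hK
    simp only [List.mem_map] at hK
    obtain ⟨s, -, rfl⟩ := hK
    exact hQup _
  have hnelow : (List.range (k - m - 1)).map (fun s => Qker q (m + 1 + s)) ≠ [] := by
    simp [hnnil]
  have hdec : QcompIcc q (m + 1) k = kCompList
      (((List.range (k - m - 1)).map fun s => Qker q (m + 1 + s)) ++ [Qker q k]) := by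
    rw [QcompIcc, hlen1, List.range_succ, List.map_append]
    simp only [List.map_cons, List.map_nil, hidx]
  have hdec1 : QcompIcc q (m + 1) (k - 1)
      = kCompList ((List.range (k - m - 1)).map fun s => Qker q (m + 1 + s)) := by
    rw [QcompIcc, hlen2]
  have hdecd : QdagCompIcc q (m + 1) k = kCompList
      (((List.range (k - m - 1)).map fun s => Qdag q (m + 1 + s)) ++ [Qdag q k]) := by
    rw [QdagCompIcc, hlen1, List.range_succ, List.map_append]
    simp only [List.map_cons, List.map_nil, hidx]
  have hdecd1 : QdagCompIcc q (m + 1) (k - 1)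
      = kCompList ((List.range (k - m - 1)).map fun s => Qdag q (m + 1 + s)) := by
    rw [QdagCompIcc, hlen2]
  have eQ : QcompIcc q (m + 1) k z1 c
      = ∑' y : ℤ, QcompIcc q (m + 1) (k - 1) z1 y * Qker q k y c := by
    rw [hdec, hdec1]
    exact snoc_low (Qker q k) (hQlow k) _ hmemlow z1 c
  have eQ' : (∑' y : ℤ, QcompIcc q (m + 1) (k - 1) z1 y * Qker q k y c)
      = ∑ y ∈ Finset.Icc (c + 1) (z1 - 1),
          QcompIcc q (m + 1) (k - 1) z1 y * Qker q k y c := by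
    refine tsum_eq_sum ?_
    intro y hy
    rw [Finset.mem_Icc] at hy
    by_cases hcase : y ≤ c
    · rw [hQlow k y c hcase, mul_zero]
    · rw [hdec1, supp_low_strict _ hnelow hmemlow z1 y (by omega), zero_mul]
  have eD : QdagCompIcc q (m + 1) k z1 z2
      = ∑ y ∈ Finset.Icc z1 z2, QdagCompIcc q (m + 1) (k - 1) z1 y * Qdag q k y z2 := by
    rw [hdecd, hdecd1, snoc_up (Qdag q k) (hQup k) _ hmemup z1 z2]
    refine tsum_eq_sum ?_
    intro y hy
    rw [Finset.mem_Icc] at hy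
    by_cases hcase : z2 < y
    · rw [hQup k y z2 hcase, mul_zero]
    · rw [supp_up _ hmemup z1 y (by omega), zero_mul]
  have key1 : QcompIcc q (m + 1) k z1 c * q k ^ (z2 - c)
      = ∑ w ∈ Finset.Icc (c + 1) (z1 - 1),
          q k ^ (z2 - w) * QcompIcc q (m + 1) (k - 1) z1 w := by
    rw [eQ, eQ', Finset.sum_mul]
    refine Finset.sum_congr rfl fun w hw => ?_
    rw [Finset.mem_Icc] at hw
    have hcw : c < w := by omega
    simp only [Qker, if_pos hcw]
    rw [mul_assoc, ← zpow_add₀ hqne, show c - w + (z2 - c) = z2 - w by ring]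
    ring
  have key2 : QdagCompIcc q (m + 1) k z1 z2
      = ∑ w ∈ Finset.Icc z1 z2, q k ^ (z2 - w) * QdagCompIcc q (m + 1) (k - 1) z1 w := by
    rw [eD]
    refine Finset.sum_congr rfl fun w hw => ?_
    rw [Finset.mem_Icc] at hw
    simp only [Qdag, if_pos hw.2]
    ring
  have hsign : ((-1 : ℝ)) ^ (k - m - 1) = (-1 : ℝ) ^ (k - m - 2) * (-1) := by
    rw [show k - m - 1 = (k - m - 2) + 1 by omega, pow_succ]
  rw [key1, key2, hsign]
  ring
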